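/- Let P be a real polynomial of exact degree n ≥ 1 with n simple real zeros and |P(y)| ≥ 1 for all critical points y, let A := {x ∈ ℝ : −1 ≤ P(x) ≤ 1}, and let x₀ ∈ ℝ \ A. Then for every polynomial Q of degree at most n, |Q(x₀)| ≤ ‖Q‖_A · |P(x₀)|, where ‖Q‖_A := sup_{x∈A}|Q(x)|. -/

import Mathlib

open Polynomial

noncomputable def supNorm (S : Set ℝ) (P : ℝ[X]) : ℝ := sSup ((fun x => |P.eval x|) '' S)

open Finset in
lemma core_lemma (m : ℕ) (P Q : ℝ[X]) (hPdeg : P.degree < ((m+1 : ℕ) : WithBot ℕ))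
    (hQdeg : Q.degree < ((m+1 : ℕ) : WithBot ℕ))
    (A : Set ℝ) (hbdd : BddAbove ((fun x => |Q.eval x|) '' A))
    (x₀ : ℝ) (t : Fin (m+1) → ℝ) (ht : StrictMono t) (htA : ∀ i, t i ∈ A)
    (hσ : ∀ i, P.eval (t i) = 1 ∨ P.eval (t i) = -1)
    (hx : ∀ i, x₀ ≠ t i)
    (hadj : ∀ i : Fin m, P.eval (t i.castSucc) * P.eval (t i.succ) *
      ((x₀ - t i.castSucc) * (x₀ - t i.succ)) < 0) :
    |Q.eval x₀| ≤ supNorm A Q * |P.eval x₀| := by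
  classical
  have hinj : Set.InjOn t (univ : Finset (Fin (m+1))) := fun a _ b _ h => ht.injective h
  set L : Fin (m+1) → ℝ := fun i => eval x₀ (Lagrange.basis univ t i) with hL
  have hLprod : ∀ i, L i = ∏ j ∈ univ.erase i, ((t i - t j)⁻¹ * (x₀ - t j)) := by
    intro i
    simp [hL, Lagrange.basis, Lagrange.basisDivisor, eval_prod]
  have hfac : ∀ i j : Fin (m+1), i ≠ j → (t i - t j)⁻¹ * (x₀ - t j) ≠ 0 := by
    intro i j hij
    exact mul_ne_zero (inv_ne_zero (sub_ne_zero_of_ne (fun h => hij (ht.injective h))))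
      (sub_ne_zero_of_ne (hx j))
  have hLne : ∀ i, L i ≠ 0 := by
    intro i
    rw [hLprod]
    exact Finset.prod_ne_zero_iff.2 fun j hj => hfac i j (mem_erase.1 hj).1.symm
  have hrepr : ∀ f : ℝ[X], f.degree < ((m+1 : ℕ) : WithBot ℕ) →
      f.eval x₀ = ∑ i, f.eval (t i) * L i := by
    intro f hf
    have hcard : f.degree < (#(univ : Finset (Fin (m+1))) : WithBot ℕ) := by
      simpa using hf
    conv_lhs => rw [Lagrange.eq_interpolate hinj hcard]
    rw [Lagrange.interpolate_apply, eval_finset_sum]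
    simp [hL]
  -- adjacent pair positivity
  have aLpos : ∀ i : Fin m, 0 < (P.eval (t i.castSucc) * L i.castSucc) *
      (P.eval (t i.succ) * L i.succ) := by
    intro i
    have hne : i.castSucc ≠ i.succ := (Fin.castSucc_lt_succ : i.castSucc < i.succ).ne
    have h1 : L i.castSucc = ((t i.castSucc - t i.succ)⁻¹ * (x₀ - t i.succ)) *
        ∏ j ∈ (univ.erase i.castSucc).erase i.succ, ((t i.castSucc - t j)⁻¹ * (x₀ - t j)) := by
      rw [hLprod]
      exact (Finset.mul_prod_erase _ _ (mem_erase.2 ⟨hne.symm, mem_univ _⟩)).symm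
    have h2 : L i.succ = ((t i.succ - t i.castSucc)⁻¹ * (x₀ - t i.castSucc)) *
        ∏ j ∈ (univ.erase i.castSucc).erase i.succ, ((t i.succ - t j)⁻¹ * (x₀ - t j)) := by
      rw [hLprod]
      rw [Finset.erase_right_comm]
      exact (Finset.mul_prod_erase _ _ (mem_erase.2 ⟨hne, mem_univ _⟩)).symm
    have hprodpos : 0 < ∏ j ∈ (univ.erase i.castSucc).erase i.succ,
        (((t i.castSucc - t j)⁻¹ * (x₀ - t j)) * ((t i.succ - t j)⁻¹ * (x₀ - t j))) := by
      refine Finset.prod_pos fun j hj => ?_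
      have hj' := Finset.mem_erase.1 hj
      have hj2 := hj'.1
      have hj1 := (Finset.mem_erase.1 hj'.2).1
      have hden : 0 < (t i.castSucc - t j) * (t i.succ - t j) := by
        rcases lt_trichotomy j i.castSucc with h | h | h
        · have h2 : t j < t i.castSucc := ht h
          have h3 : t j < t i.succ := ht (h.trans (Fin.castSucc_lt_succ : i.castSucc < i.succ))
          exact mul_pos (by linarith) (by linarith)
        · exact absurd h hj1
        · have hsj : i.succ < j := lt_of_le_of_ne (Fin.castSucc_lt_iff_succ_le.1 h) (Ne.symm hj2)
          have h2 : t i.castSucc < t j := ht h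
          have h3 : t i.succ < t j := ht hsj
          exact mul_pos_of_neg_of_neg (by linarith) (by linarith)
      have hxj : (x₀ - t j) ≠ 0 := sub_ne_zero_of_ne (hx j)
      have heq : ((t i.castSucc - t j)⁻¹ * (x₀ - t j)) * ((t i.succ - t j)⁻¹ * (x₀ - t j))
          = (x₀ - t j)^2 * ((t i.castSucc - t j) * (t i.succ - t j))⁻¹ := by
        rw [mul_inv]; ring
      rw [heq]
      have : 0 < (x₀ - t j)^2 := lt_of_le_of_ne (sq_nonneg _) (Ne.symm (pow_ne_zero 2 hxj))
      exact mul_pos this (inv_pos.2 hden)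
    have hkey : (P.eval (t i.castSucc) * L i.castSucc) * (P.eval (t i.succ) * L i.succ)
        = (-(P.eval (t i.castSucc) * P.eval (t i.succ) *
            ((x₀ - t i.castSucc) * (x₀ - t i.succ)))) * ((t i.succ - t i.castSucc)^2)⁻¹ *
          ∏ j ∈ (univ.erase i.castSucc).erase i.succ,
            (((t i.castSucc - t j)⁻¹ * (x₀ - t j)) * ((t i.succ - t j)⁻¹ * (x₀ - t j))) := by
      have hp := Finset.prod_mul_distrib (s := (univ.erase i.castSucc).erase i.succ)
        (f := fun j => (t i.castSucc - t j)⁻¹ * (x₀ - t j))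
        (g := fun j => (t i.succ - t j)⁻¹ * (x₀ - t j))
      rw [h1, h2, hp]
      rw [show t i.castSucc - t i.succ = -(t i.succ - t i.castSucc) by ring, inv_neg,
        show ((t i.succ - t i.castSucc)^2)⁻¹
          = (t i.succ - t i.castSucc)⁻¹ * (t i.succ - t i.castSucc)⁻¹ by rw [sq, mul_inv]]
      ring
    rw [hkey]
    have hsq : 0 < ((t i.succ - t i.castSucc)^2)⁻¹ := by
      have : t i.castSucc < t i.succ := ht (Fin.castSucc_lt_succ : i.castSucc < i.succ)
      have h0 : (t i.succ - t i.castSucc) ≠ 0 := sub_ne_zero_of_ne this.ne'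
      exact inv_pos.2 (lt_of_le_of_ne (sq_nonneg _) (Ne.symm (pow_ne_zero 2 h0)))
    exact mul_pos (mul_pos (by linarith [hadj i]) hsq) hprodpos
  set a : Fin (m+1) → ℝ := fun i => P.eval (t i) * L i with ha
  have hane : ∀ i, a i ≠ 0 := by
    intro i
    rcases hσ i with h | h <;> simp [ha, h, hLne i]
  have hchain : ∀ i, 0 < a 0 * a i := by
    intro i
    induction i using Fin.induction with
    | zero => exact mul_self_pos.2 (hane 0)
    | succ i ih =>
      have h1 := aLpos i
      have h2 : 0 < a i.castSucc * a i.succ := h1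
      rcases mul_pos_iff.1 ih with ⟨p1, p2⟩ | ⟨n1, n2⟩
      · rcases mul_pos_iff.1 h2 with ⟨q1, q2⟩ | ⟨r1, r2⟩
        · exact mul_pos p1 q2
        · exact absurd p2 (not_lt.2 r1.le)
      · rcases mul_pos_iff.1 h2 with ⟨q1, q2⟩ | ⟨r1, r2⟩
        · exact absurd q1 (not_lt.2 n2.le)
        · exact mul_pos_of_neg_of_neg n1 r2
  set τ : ℝ := if 0 < a 0 then 1 else -1 with hτ
  have habs : ∀ i, |L i| = τ * a i := by
    intro i
    have hLa : |L i| = |a i| := by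
      rcases hσ i with h | h <;> simp [ha, h, abs_mul]
    rw [hLa, hτ]
    split_ifs with h0
    · have : 0 < a i := by
        rcases mul_pos_iff.1 (hchain i) with ⟨_, h⟩ | ⟨h, _⟩
        · exact h
        · exact absurd h0 (not_lt.2 h.le)
      rw [abs_of_pos this, one_mul]
    · have ha0 : a 0 < 0 := (hane 0).lt_of_le (not_lt.1 h0)
      have : a i < 0 := by
        rcases mul_pos_iff.1 (hchain i) with ⟨h, _⟩ | ⟨_, h⟩
        · exact absurd h (not_lt.2 ha0.le)
        · exact h
      rw [abs_of_neg this]; ring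
  have hPsum : P.eval x₀ = ∑ i, a i := hrepr P hPdeg
  have hQsum : Q.eval x₀ = ∑ i, Q.eval (t i) * L i := hrepr Q hQdeg
  set M := supNorm A Q with hM
  have hMle : ∀ i, |Q.eval (t i)| ≤ M :=
    fun i => le_csSup hbdd ⟨t i, htA i, rfl⟩
  have hM0 : 0 ≤ M := le_trans (abs_nonneg _) (hMle 0)
  have hτP : τ * P.eval x₀ ≤ |P.eval x₀| := by
    rw [hτ]; split_ifs
    · rw [one_mul]; exact le_abs_self _
    · rw [neg_one_mul]; exact neg_le_abs _
  calc |Q.eval x₀| = |∑ i, Q.eval (t i) * L i| := by rw [hQsum]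
    _ ≤ ∑ i, |Q.eval (t i) * L i| := Finset.abs_sum_le_sum_abs _ _
    _ = ∑ i, |Q.eval (t i)| * |L i| := by simp [abs_mul]
    _ ≤ ∑ i, M * |L i| :=
        Finset.sum_le_sum fun i _ => mul_le_mul_of_nonneg_right (hMle i) (abs_nonneg _)
    _ = M * ∑ i, |L i| := by rw [Finset.mul_sum]
    _ = M * ∑ i, τ * a i := by
        congr 1
        exact Finset.sum_congr rfl fun i _ => habs i
    _ = M * (τ * P.eval x₀) := by rw [hPsum, ← Finset.mul_sum]
    _ ≤ M * |P.eval x₀| := mul_le_mul_of_nonneg_left hτP hM0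

lemma ivt_left (p : ℝ[X]) {a b sg : ℝ} (hab : a ≤ b) (hsg : sg = 1 ∨ sg = -1)
    (ha : p.eval a = 0) (hb : 1 ≤ sg * p.eval b) :
    ∃ w, w ∈ Set.Icc a b ∧ p.eval w = sg := by
  have hc : ContinuousOn (fun x => p.eval x) (Set.Icc a b) := (p.continuous).continuousOn
  rcases hsg with h | h
  · subst h
    have hmem : (1:ℝ) ∈ Set.Icc (p.eval a) (p.eval b) := ⟨by rw [ha]; norm_num, by linarith⟩
    obtain ⟨w, hw, hw2⟩ := intermediate_value_Icc hab hc hmem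
    exact ⟨w, hw, hw2⟩
  · subst h
    have hmem : (-1:ℝ) ∈ Set.Icc (p.eval b) (p.eval a) := ⟨by linarith, by rw [ha]; norm_num⟩
    obtain ⟨w, hw, hw2⟩ := intermediate_value_Icc' hab hc hmem
    exact ⟨w, hw, hw2⟩

lemma ivt_right (p : ℝ[X]) {a b sg : ℝ} (hab : a ≤ b) (hsg : sg = 1 ∨ sg = -1)
    (ha : 1 ≤ sg * p.eval a) (hb : p.eval b = 0) :
    ∃ w, w ∈ Set.Icc a b ∧ p.eval w = sg := by
  have hc : ContinuousOn (fun x => p.eval x) (Set.Icc a b) := (p.continuous).continuousOn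
  rcases hsg with h | h
  · subst h
    have hmem : (1:ℝ) ∈ Set.Icc (p.eval b) (p.eval a) := ⟨by rw [hb]; norm_num, by linarith⟩
    obtain ⟨w, hw, hw2⟩ := intermediate_value_Icc' hab hc hmem
    exact ⟨w, hw, hw2⟩
  · subst h
    have hmem : (-1:ℝ) ∈ Set.Icc (p.eval a) (p.eval b) := ⟨by linarith, by rw [hb]; norm_num⟩
    obtain ⟨w, hw, hw2⟩ := intermediate_value_Icc hab hc hmem
    exact ⟨w, hw, hw2⟩

set_option maxHeartbeats 4000000 in
theorem bernstein_walsh_inverse_image (n : ℕ) (hn : 1 ≤ n) (P : ℝ[X])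
    (hdeg : P.natDegree = n)
    (hroots : P.roots.card = n ∧ P.roots.Nodup)
    (hcrit : ∀ y : ℝ, P.derivative.eval y = 0 → 1 ≤ |P.eval y|)
    (A : Set ℝ) (hA : A = {x : ℝ | P.eval x ∈ Set.Icc (-1 : ℝ) 1})
    (x₀ : ℝ) (hx₀ : x₀ ∉ A) :
    ∀ Q : ℝ[X], Q.degree ≤ n → |Q.eval x₀| ≤ supNorm A Q * |P.eval x₀| := by
  classical
  intro Q hQ
  have hP0 : P ≠ 0 := fun h => by rw [h, natDegree_zero] at hdeg; omega
  have hcne : P.leadingCoeff ≠ 0 := leadingCoeff_ne_zero.2 hP0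
  set c := P.leadingCoeff with hcdef
  have hcard : P.roots.toFinset.card = n := by
    rw [Multiset.toFinset_card_of_nodup hroots.2, hroots.1]
  set R := P.roots.toFinset with hR
  set e := R.orderIsoOfFin hcard with he
  set z : Fin n → ℝ := fun i => (e i : ℝ) with hz
  have hzmono : StrictMono z := fun i j hij => by
    have := e.strictMono hij
    exact_mod_cast this
  have hzroot : ∀ i, P.eval (z i) = 0 := by
    intro i
    have hm : (z i) ∈ P.roots := Multiset.mem_toFinset.1 (e i).2
    exact ((Polynomial.mem_roots hP0).1 hm)
  have hroot_ex : ∀ y, P.eval y = 0 → ∃ i, z i = y := by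
    intro y hy
    have hyR : y ∈ R := Multiset.mem_toFinset.2 ((Polynomial.mem_roots hP0).2 hy)
    refine ⟨e.symm ⟨y, hyR⟩, ?_⟩
    simp [hz]
  have hfact := Polynomial.C_leadingCoeff_mul_prod_multiset_X_sub_C
    (p := P) (by rw [hroots.1, hdeg])
  have heval : ∀ y, P.eval y = c * ∏ i, (y - z i) := by
    intro y
    conv_lhs => rw [← hfact]
    rw [eval_mul, eval_C]
    congr 1
    rw [Polynomial.eval_multiset_prod, Multiset.map_map]
    have hval : P.roots = R.val := by
      rw [hR, Multiset.toFinset_val, Multiset.dedup_eq_self.2 hroots.2]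
    rw [hval]
    have h1 : ∏ x ∈ R, (y - x)
        = (Multiset.map ((fun p => eval y p) ∘ fun a => X - C a) R.val).prod := by
      rw [Finset.prod_eq_multiset_prod]
      congr 1
      apply Multiset.map_congr rfl
      intro a _
      simp
    rw [← h1]
    rw [← Finset.prod_coe_sort]
    exact (Fintype.prod_equiv e.toEquiv (fun i => y - z i) (fun x => y - (x : ℝ))
      (fun i => rfl)).symm
  -- sign bookkeeping
  set ε : ℝ := if 0 < c then 1 else -1 with hε
  have hεc : 0 < ε * c := by
    rw [hε]
    rcases lt_trichotomy c 0 with h | h | h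
    · rw [if_neg (by linarith)]; nlinarith
    · exact absurd h hcne
    · rw [if_pos h]; linarith
  set s : ℕ → ℝ := fun g => ε * ∏ i : Fin n, (if g ≤ (i : ℕ) then (-1 : ℝ) else 1) with hs
  have hεε : ε * ε = 1 := by rw [hε]; split_ifs <;> norm_num
  have hs1 : ∀ g, s g = 1 ∨ s g = -1 := by
    intro g
    have hsq : s g * s g = 1 := by
      have h0 : s g * s g = (ε * ε) * ((∏ i : Fin n, (if g ≤ (i : ℕ) then (-1 : ℝ) else 1))
          * (∏ i : Fin n, (if g ≤ (i : ℕ) then (-1 : ℝ) else 1))) := by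
        rw [hs]; ring
      rw [h0, hεε, one_mul, ← Finset.prod_mul_distrib]
      refine Finset.prod_eq_one fun i _ => ?_
      split_ifs <;> norm_num
    exact mul_self_eq_one_iff.1 hsq
  have hsalt : ∀ g, g < n → s g * s (g + 1) = -1 := by
    intro g hg
    rw [hs]
    have hcombine : (∏ i : Fin n, (if g ≤ (i : ℕ) then (-1 : ℝ) else 1))
        * (∏ i : Fin n, (if g + 1 ≤ (i : ℕ) then (-1 : ℝ) else 1))
        = ∏ i : Fin n, (if i = (⟨g, hg⟩ : Fin n) then (-1 : ℝ) else 1) := by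
      rw [← Finset.prod_mul_distrib]
      refine Finset.prod_congr rfl fun i _ => ?_
      rcases lt_trichotomy ((i : ℕ)) g with h | h | h
      · rw [if_neg (by omega), if_neg (by omega), if_neg (by simp [Fin.ext_iff]; omega)]
        norm_num
      · rw [if_pos (by omega), if_neg (by omega), if_pos (by simp [Fin.ext_iff, h.symm])]
        norm_num
      · rw [if_pos (by omega), if_pos (by omega), if_neg (by simp [Fin.ext_iff]; omega)]
        norm_num
    have h0 : ε * (∏ i : Fin n, (if g ≤ (i : ℕ) then (-1 : ℝ) else 1))
          * (ε * (∏ i : Fin n, (if g + 1 ≤ (i : ℕ) then (-1 : ℝ) else 1)))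
        = (ε * ε) * ((∏ i : Fin n, (if g ≤ (i : ℕ) then (-1 : ℝ) else 1))
          * (∏ i : Fin n, (if g + 1 ≤ (i : ℕ) then (-1 : ℝ) else 1))) := by ring
    rw [h0, hεε, one_mul, hcombine, Finset.prod_ite_eq' Finset.univ (⟨g, hg⟩ : Fin n)
      (fun _ => (-1 : ℝ))]
    simp
  have hsign : ∀ g, g ≤ n → ∀ y, (∀ i : Fin n, (i : ℕ) < g → z i < y) →
      (∀ i : Fin n, g ≤ (i : ℕ) → y < z i) → 0 < s g * P.eval y := by
    intro g hg y hl hr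
    rw [heval, hs]
    have hrw : ε * (∏ i : Fin n, (if g ≤ (i : ℕ) then (-1 : ℝ) else 1)) * (c * ∏ i, (y - z i))
        = (ε * c) * ∏ i : Fin n, ((if g ≤ (i : ℕ) then (-1 : ℝ) else 1) * (y - z i)) := by
      rw [Finset.prod_mul_distrib]; ring
    rw [hrw]
    refine mul_pos hεc (Finset.prod_pos fun i _ => ?_)
    by_cases h : g ≤ (i : ℕ)
    · rw [if_pos h]
      have := hr i h
      nlinarith
    · rw [if_neg h]
      have := hl i (by omega)
      nlinarith
  -- x₀ facts
  have hPx₀ : 1 < |P.eval x₀| := by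
    rw [hA] at hx₀
    simp only [Set.mem_setOf_eq, Set.mem_Icc, not_and, not_le] at hx₀
    rcases le_or_gt (P.eval x₀) 1 with h | h
    · rcases le_or_gt (-1) (P.eval x₀) with h2 | h2
      · exact absurd h (not_le.2 (hx₀ h2))
      · rw [abs_of_neg (by linarith)]; linarith
    · rw [abs_of_pos (by linarith)]; linarith
  have hx₀roots : ∀ i, x₀ ≠ z i := by
    intro i h
    rw [h, hzroot i, abs_zero] at hPx₀
    linarith
  set k := (Finset.univ.filter fun i : Fin n => z i < x₀).card with hkdef
  have hkn : k ≤ n := by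
    rw [hkdef]
    calc (Finset.univ.filter fun i : Fin n => z i < x₀).card
        ≤ Finset.univ.card := Finset.card_filter_le _ _
      _ = n := by simp
  have hgapL : ∀ i : Fin n, (i : ℕ) < k → z i < x₀ := by
    intro i hik
    by_contra h
    have hsub : (Finset.univ.filter fun j : Fin n => z j < x₀) ⊆ Finset.Iio i := by
      intro j hj
      rw [Finset.mem_filter] at hj
      rw [Finset.mem_Iio]
      by_contra hji
      exact h (lt_of_le_of_lt (hzmono.monotone (not_lt.1 hji)) hj.2)
    have := Finset.card_le_card hsub
    rw [Fin.card_Iio] at this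
    omega
  have hgapR : ∀ i : Fin n, k ≤ (i : ℕ) → x₀ < z i := by
    intro i hik
    have h : ¬ z i < x₀ := by
      intro h
      have hsub : Finset.Iic i ⊆ (Finset.univ.filter fun j : Fin n => z j < x₀) := by
        intro j hj
        rw [Finset.mem_Iic] at hj
        rw [Finset.mem_filter]
        exact ⟨Finset.mem_univ _, lt_of_le_of_lt (hzmono.monotone hj) h⟩
      have := Finset.card_le_card hsub
      rw [Fin.card_Iic] at this
      omega
    exact lt_of_le_of_ne (not_lt.1 h) (hx₀roots i)
  have hskx : 1 < s k * P.eval x₀ := by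
    have hpos := hsign k hkn x₀ hgapL hgapR
    have habs1 : |s k| = 1 := by rcases hs1 k with h | h <;> rw [h] <;> norm_num
    have : s k * P.eval x₀ = |s k * P.eval x₀| := (abs_of_pos hpos).symm
    rw [this, abs_mul, habs1, one_mul]
    exact hPx₀
  -- degree facts
  have hdegpos : 0 < P.degree := natDegree_pos_iff_degree_pos.1 (by omega)
  have hPdeg' : P.degree < ((n + 1 : ℕ) : WithBot ℕ) := by
    rw [degree_eq_natDegree hP0, hdeg]
    exact_mod_cast lt_add_one n
  have hQdeg' : Q.degree < ((n + 1 : ℕ) : WithBot ℕ) :=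
    lt_of_le_of_lt hQ (by exact_mod_cast lt_add_one n)
  -- A facts
  have hAt : ∀ w : ℝ, (P.eval w = 1 ∨ P.eval w = -1) → w ∈ A := by
    intro w h
    rw [hA]
    rcases h with h | h <;> simp [Set.mem_Icc, h] <;> norm_num
  have hAs : ∀ w : ℝ, P.eval w = s k → w ∈ A := by
    intro w h
    refine hAt w ?_
    rw [h]; exact hs1 k
  -- tendsto facts
  have htB : Filter.Tendsto (fun x => |P.eval x|) Filter.atBot Filter.atTop := by
    have hcompdeg : (P.comp (-X)).natDegree = n := by
      rw [natDegree_comp]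
      simp [hdeg]
    have hdp : 0 < (P.comp (-X)).degree := natDegree_pos_iff_degree_pos.1 (by omega)
    have h1 := Polynomial.abs_tendsto_atTop (P.comp (-X)) hdp
    have h2 : Filter.Tendsto (fun x : ℝ => -x) Filter.atBot Filter.atTop :=
      Filter.tendsto_neg_atBot_atTop
    refine Filter.Tendsto.congr ?_ (h1.comp h2)
    intro x
    simp [Function.comp, eval_comp]
  have htT := Polynomial.abs_tendsto_atTop P hdegpos
  have hbdd : BddAbove ((fun x => |Q.eval x|) '' A) := by
    have h2 := htB.eventually_ge_atTop 2
    rw [Filter.eventually_atBot] at h2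
    obtain ⟨lo, hlo⟩ := h2
    have h3 := htT.eventually_ge_atTop 2
    rw [Filter.eventually_atTop] at h3
    obtain ⟨hi, hhi⟩ := h3
    have hclosed : IsClosed A := by
      rw [hA]
      exact isClosed_Icc.preimage P.continuous
    have hKc : IsCompact A := by
      refine IsCompact.of_isClosed_subset (isCompact_Icc (a := lo) (b := hi)) hclosed ?_
      intro x hxA
      have hxle : |P.eval x| ≤ 1 := by
        rw [hA] at hxA
        simp only [Set.mem_setOf_eq, Set.mem_Icc] at hxA
        exact abs_le.2 hxA
      constructor
      · by_contra h
        have := hlo x (le_of_lt (not_le.1 h))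
        linarith
      · by_contra h
        have := hhi x (le_of_lt (not_le.1 h))
        linarith
    exact (hKc.image (Q.continuous.abs)).bddAbove
  -- extended roots function
  set zn : ℕ → ℝ := fun j => if h : j < n then z ⟨j, h⟩ else 0 with hzn
  have hznz : ∀ (j : ℕ) (h : j < n), zn j = z ⟨j, h⟩ := by
    intro j h; rw [hzn]; simp [h]
  -- sign helpers
  have habs1 : ∀ g, |s g| = 1 := fun g => by rcases hs1 g with h | h <;> rw [h] <;> norm_num
  have hsne : ∀ g, s g ≠ 0 := fun g => by rcases hs1 g with h | h <;> rw [h] <;> norm_num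
  have hone : ∀ g y, 0 < s g * P.eval y → 1 ≤ |P.eval y| → 1 ≤ s g * P.eval y := by
    intro g y hpos h1
    have h2 : |s g * P.eval y| = s g * P.eval y := abs_of_pos hpos
    rw [abs_mul, habs1 g, one_mul] at h2
    linarith
  -- node existence
  have hI : ∀ g : ℕ, ∃ w : ℝ, 1 ≤ g → g < n →
      zn (g - 1) < w ∧ w < zn g ∧ P.eval w = s g := by
    intro g
    by_cases hg : 1 ≤ g ∧ g < n
    · obtain ⟨hg1, hg2⟩ := hg
      have hg1n : g - 1 < n := by omega
      have hab : z ⟨g - 1, hg1n⟩ < z ⟨g, hg2⟩ := hzmono (by simp [Fin.lt_def]; omega)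
      obtain ⟨y, hy, hy'⟩ := exists_deriv_eq_zero hab P.continuous.continuousOn
        (by rw [hzroot, hzroot])
      rw [Polynomial.deriv] at hy'
      have hypos : 0 < s g * P.eval y := by
        refine hsign g (by omega) y (fun i hi => ?_) (fun i hi => ?_)
        · exact lt_of_le_of_lt (hzmono.monotone (show i ≤ (⟨g - 1, hg1n⟩ : Fin n) by
            simp [Fin.le_def]; omega)) hy.1
        · exact lt_of_lt_of_le hy.2 (hzmono.monotone (show (⟨g, hg2⟩ : Fin n) ≤ i by
            simp [Fin.le_def]; omega))
      obtain ⟨w, hw, hw3⟩ := ivt_left P (le_of_lt hy.1) (hs1 g) (hzroot ⟨g - 1, hg1n⟩)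
        (hone g y hypos (hcrit y hy'))
      have hwa : z ⟨g - 1, hg1n⟩ < w :=
        hw.1.lt_of_ne (fun h => hsne g (by rw [← hw3, ← h, hzroot]))
      exact ⟨w, fun _ _ => ⟨by rw [hznz (g - 1) hg1n]; exact hwa,
        by rw [hznz g hg2]; exact lt_of_le_of_lt hw.2 hy.2, hw3⟩⟩
    · exact ⟨0, fun h1 h2 => absurd ⟨h1, h2⟩ hg⟩
  have hL0 : ∃ w : ℝ, w < zn 0 ∧ P.eval w = s 0 := by
    have h0n : 0 < n := hn
    have h2 := htB.eventually_ge_atTop 1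
    rw [Filter.eventually_atBot] at h2
    obtain ⟨b0, hb0⟩ := h2
    set b := min b0 (z ⟨0, h0n⟩ - 1) with hb
    have hb1 : 1 ≤ |P.eval b| := hb0 b (min_le_left _ _)
    have hbz : b < z ⟨0, h0n⟩ := lt_of_le_of_lt (min_le_right _ _) (by linarith)
    have hbpos : 0 < s 0 * P.eval b := by
      refine hsign 0 (by omega) b (fun i hi => absurd hi (by omega)) (fun i _ => ?_)
      exact lt_of_lt_of_le hbz (hzmono.monotone (show (⟨0, h0n⟩ : Fin n) ≤ i by
        simp [Fin.le_def]))
    obtain ⟨w, hw, hw3⟩ := ivt_right P (le_of_lt hbz) (hs1 0) (hone 0 b hbpos hb1)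
      (hzroot ⟨0, h0n⟩)
    have hwz : w < z ⟨0, h0n⟩ := hw.2.lt_of_ne (fun h => hsne 0 (by rw [← hw3, h, hzroot]))
    exact ⟨w, by rw [hznz 0 h0n]; exact hwz, hw3⟩
  have hR0 : ∃ w : ℝ, zn (n - 1) < w ∧ P.eval w = s n := by
    have hn1 : n - 1 < n := by omega
    have h2 := htT.eventually_ge_atTop 1
    rw [Filter.eventually_atTop] at h2
    obtain ⟨b0, hb0⟩ := h2
    set b := max b0 (z ⟨n - 1, hn1⟩ + 1) with hb
    have hb1 : 1 ≤ |P.eval b| := hb0 b (le_max_left _ _)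
    have hbz : z ⟨n - 1, hn1⟩ < b := lt_of_lt_of_le (by linarith) (le_max_right _ _)
    have hbpos : 0 < s n * P.eval b := by
      refine hsign n le_rfl b (fun i hi => ?_) (fun i hi => absurd hi (by omega))
      exact lt_of_le_of_lt (hzmono.monotone (show i ≤ (⟨n - 1, hn1⟩ : Fin n) by
        simp [Fin.le_def]; omega)) hbz
    obtain ⟨w, hw, hw3⟩ := ivt_left P (le_of_lt hbz) (hs1 n) (hzroot ⟨n - 1, hn1⟩)
      (hone n b hbpos hb1)
    have hwz : z ⟨n - 1, hn1⟩ < w :=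
      hw.1.lt_of_ne (fun h => hsne n (by rw [← hw3, ← h, hzroot]))
    exact ⟨w, by rw [hznz (n - 1) hn1]; exact hwz, hw3⟩
  have hWm : ∃ w : ℝ, 1 ≤ k → zn (k - 1) < w ∧ w < x₀ ∧ P.eval w = s k := by
    by_cases hk1 : 1 ≤ k
    · have hkn' : k - 1 < n := by omega
      have hax : z ⟨k - 1, hkn'⟩ < x₀ := hgapL _ (by simp; omega)
      obtain ⟨w, hw, hw3⟩ := ivt_left P hax.le (hs1 k) (hzroot ⟨k - 1, hkn'⟩) (le_of_lt hskx)
      have hwa : z ⟨k - 1, hkn'⟩ < w :=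
        hw.1.lt_of_ne (fun h => hsne k (by rw [← hw3, ← h, hzroot]))
      have hwx : w < x₀ := hw.2.lt_of_ne (fun h => by
        rw [h] at hw3
        have := habs1 k
        rw [← hw3] at this
        linarith)
      exact ⟨w, fun _ => ⟨by rw [hznz (k - 1) hkn']; exact hwa, hwx, hw3⟩⟩
    · exact ⟨0, fun h => absurd h hk1⟩
  have hWp : ∃ w : ℝ, k < n → x₀ < w ∧ w < zn k ∧ P.eval w = s k := by
    by_cases hk2 : k < n
    · have hax : x₀ < z ⟨k, hk2⟩ := hgapR _ (by simp)
      obtain ⟨w, hw, hw3⟩ := ivt_right P hax.le (hs1 k) (le_of_lt hskx) (hzroot ⟨k, hk2⟩)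
      have hwa : w < z ⟨k, hk2⟩ :=
        hw.2.lt_of_ne (fun h => hsne k (by rw [← hw3, h, hzroot]))
      have hwx : x₀ < w := hw.1.lt_of_ne (fun h => by
        rw [← h] at hw3
        have := habs1 k
        rw [← hw3] at this
        linarith)
      exact ⟨w, fun _ => ⟨hwx, by rw [hznz k hk2]; exact hwa, hw3⟩⟩
    · exact ⟨0, fun h => absurd h hk2⟩
  obtain ⟨ndI, hndI⟩ := Classical.axiomOfChoice hI
  obtain ⟨wl, hwl1, hwl2⟩ := hL0
  obtain ⟨wr, hwr1, hwr2⟩ := hR0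
  obtain ⟨wm, hwm⟩ := hWm
  obtain ⟨wp, hwp⟩ := hWp
  have hzk : ∀ (j : ℕ) (h : j < n), j < k → z ⟨j, h⟩ < x₀ := fun j h hj => hgapL _ hj
  by_cases hk0 : k = 0
  · -- x₀ is to the left of all roots
    have hkn0 : k < n := by omega
    obtain ⟨hwp1, hwp2, hwp3⟩ := hwp hkn0
    rw [hk0] at hwp2 hwp3
    set tv : ℕ → ℝ := fun j => if j = 0 then wp else if j = n then wr else ndI j with htv
    set t : Fin (n+1) → ℝ := fun i => tv (i : ℕ) with htdef
    have hval : ∀ j : ℕ, j ≤ n → P.eval (tv j) = s j := by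
      intro j hj
      rw [htv]
      simp only
      split_ifs with h0 hn'
      · subst h0; exact hwp3
      · subst hn'; exact hwr2
      · exact (hndI j (by omega) (by omega)).2.2
    have hlow : ∀ j : ℕ, j ≤ n → x₀ < tv j := by
      intro j hj
      rw [htv]
      simp only
      split_ifs with h0 hn'
      · exact hwp1
      · have h1 : x₀ < z ⟨n - 1, by omega⟩ := hgapR _ (by simp; omega)
        have h2 := hwr1
        rw [hznz (n - 1) (by omega)] at h2
        linarith
      · have h1 : x₀ < z ⟨j - 1, by omega⟩ := hgapR _ (by simp; omega)
        have h2 := (hndI j (by omega) (by omega)).1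
        rw [hznz (j - 1) (by omega)] at h2
        linarith
    have hmono' : ∀ j : ℕ, j < n → tv j < tv (j + 1) := by
      intro j hj
      rw [htv]
      simp only
      by_cases h0 : j = 0
      · subst h0
        rw [if_pos rfl, if_neg (by omega : ¬ (0:ℕ) + 1 = 0)]
        have hup : wp < z ⟨0, by omega⟩ := by
          have h3 := hwp2; rw [hznz 0 (by omega)] at h3; exact h3
        by_cases h1 : (0:ℕ) + 1 = n
        · rw [if_pos h1]
          have h2 := hwr1
          rw [hznz (n - 1) (by omega)] at h2
          have hidx : (⟨0, by omega⟩ : Fin n) = ⟨n - 1, by omega⟩ := by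
            simp only [Fin.ext_iff]; omega
          rw [hidx] at hup
          linarith
        · rw [if_neg h1]
          have h2 := (hndI 1 (by omega) (by omega)).1
          rw [show (1:ℕ) - 1 = 0 from rfl, hznz 0 (by omega)] at h2
          linarith
      · rw [if_neg h0, if_neg (by omega : ¬ j = n), if_neg (by omega : ¬ j + 1 = 0)]
        have hup := (hndI j (by omega) (by omega)).2.1
        rw [hznz j hj] at hup
        by_cases h1 : j + 1 = n
        · rw [if_pos h1]
          have h2 := hwr1
          rw [hznz (n - 1) (by omega)] at h2
          have hidx : (⟨j, hj⟩ : Fin n) = ⟨n - 1, by omega⟩ := by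
            simp only [Fin.ext_iff]; omega
          rw [hidx] at hup
          linarith
        · rw [if_neg h1]
          have h2 := (hndI (j + 1) (by omega) (by omega)).1
          simp only [Nat.add_sub_cancel] at h2
          rw [hznz j (by omega)] at h2
          linarith
    have hmono : StrictMono t := by
      rw [Fin.strictMono_iff_lt_succ]
      intro i
      have h1 : t i.castSucc = tv (i : ℕ) := by simp [htdef]
      have h2 : t i.succ = tv ((i : ℕ) + 1) := by simp [htdef]
      rw [h1, h2]
      exact hmono' i i.isLt
    have hvt : ∀ i : Fin (n+1), P.eval (t i) = s (i : ℕ) := by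
      intro i
      rw [htdef]
      exact hval i (by omega)
    have hxne : ∀ i : Fin (n+1), x₀ ≠ t i := by
      intro i
      exact (by rw [htdef]; exact hlow i (by omega) : x₀ < t i).ne
    have htA2 : ∀ i : Fin (n+1), t i ∈ A := by
      intro i
      refine hAt _ ?_
      rw [hvt i]; exact hs1 _
    have hσ2 : ∀ i : Fin (n+1), P.eval (t i) = 1 ∨ P.eval (t i) = -1 := by
      intro i; rw [hvt i]; exact hs1 _
    have hadj : ∀ i : Fin n, P.eval (t i.castSucc) * P.eval (t i.succ) *
        ((x₀ - t i.castSucc) * (x₀ - t i.succ)) < 0 := by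
      intro i
      have h1 : t i.castSucc = tv (i : ℕ) := by simp [htdef]
      have h2 : t i.succ = tv ((i : ℕ) + 1) := by simp [htdef]
      have e1 : P.eval (t i.castSucc) = s (i : ℕ) := by rw [h1]; exact hval i (by omega)
      have e2 : P.eval (t i.succ) = s ((i : ℕ) + 1) := by rw [h2]; exact hval _ (by omega)
      rw [e1, e2, h1, h2, hsalt i i.isLt]
      have hp := mul_pos_of_neg_of_neg
        (sub_neg.2 (hlow i (by omega))) (sub_neg.2 (hlow ((i : ℕ) + 1) (by omega)))
      linarith
    exact core_lemma n P Q hPdeg' hQdeg' A hbdd x₀ t hmono htA2 hσ2 hxne hadj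
  · by_cases hkn' : k = n
    · -- x₀ is to the right of all roots
      obtain ⟨hwm1, hwm2, hwm3⟩ := hwm (by omega)
      rw [hkn'] at hwm1 hwm3
      set tv : ℕ → ℝ := fun j => if j = n then wm else if j = 0 then wl else ndI j with htv
      set t : Fin (n+1) → ℝ := fun i => tv (i : ℕ) with htdef
      have hval : ∀ j : ℕ, j ≤ n → P.eval (tv j) = s j := by
        intro j hj
        rw [htv]
        simp only
        split_ifs with hn'' h0
        · subst hn''; exact hwm3
        · subst h0; exact hwl2
        · exact (hndI j (by omega) (by omega)).2.2
      have hhigh : ∀ j : ℕ, j ≤ n → tv j < x₀ := by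
        intro j hj
        rw [htv]
        simp only
        split_ifs with hn'' h0
        · exact hwm2
        · have h1 : z ⟨0, by omega⟩ < x₀ := hzk 0 (by omega) (by omega)
          have h2 := hwl1
          rw [hznz 0 (by omega)] at h2
          linarith
        · have h1 : z ⟨j, by omega⟩ < x₀ := hzk j (by omega) (by omega)
          have h2 := (hndI j (by omega) (by omega)).2.1
          rw [hznz j (by omega)] at h2
          linarith
      have hmono' : ∀ j : ℕ, j < n → tv j < tv (j + 1) := by
        intro j hj
        rw [htv]
        simp only
        by_cases h1 : j + 1 = n
        · rw [if_pos h1, if_neg (by omega : ¬ j = n)]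
          by_cases h0 : j = 0
          · rw [if_pos h0]
            have h2 := hwl1
            rw [hznz 0 (by omega)] at h2
            have h3 := hwm1
            rw [hznz (n - 1) (by omega)] at h3
            have hidx : (⟨0, by omega⟩ : Fin n) = ⟨n - 1, by omega⟩ := by
              simp only [Fin.ext_iff]; omega
            rw [hidx] at h2
            linarith
          · rw [if_neg h0]
            have h2 := (hndI j (by omega) (by omega)).2.1
            rw [hznz j (by omega)] at h2
            have h3 := hwm1
            rw [hznz (n - 1) (by omega)] at h3
            have hidx : (⟨j, by omega⟩ : Fin n) = ⟨n - 1, by omega⟩ := by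
              simp only [Fin.ext_iff]; omega
            rw [hidx] at h2
            linarith
        · rw [if_neg (by omega : ¬ j = n), if_neg h1, if_neg (by omega : ¬ j + 1 = 0)]
          have h2 := (hndI (j + 1) (by omega) (by omega)).1
          simp only [Nat.add_sub_cancel] at h2
          rw [hznz j (by omega)] at h2
          by_cases h0 : j = 0
          · rw [if_pos h0]
            have h3 := hwl1
            rw [hznz 0 (by omega)] at h3
            have hidx : (⟨j, by omega⟩ : Fin n) = ⟨0, by omega⟩ := by
              simp only [Fin.ext_iff]; omega
            rw [hidx] at h2
            linarith
          · rw [if_neg h0]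
            have h3 := (hndI j (by omega) (by omega)).2.1
            rw [hznz j (by omega)] at h3
            linarith
      have hmono : StrictMono t := by
        rw [Fin.strictMono_iff_lt_succ]
        intro i
        have h1 : t i.castSucc = tv (i : ℕ) := by simp [htdef]
        have h2 : t i.succ = tv ((i : ℕ) + 1) := by simp [htdef]
        rw [h1, h2]
        exact hmono' i i.isLt
      have hvt : ∀ i : Fin (n+1), P.eval (t i) = s (i : ℕ) := by
        intro i
        rw [htdef]
        exact hval i (by omega)
      have hxne : ∀ i : Fin (n+1), x₀ ≠ t i := by
        intro i
        exact (by rw [htdef]; exact hhigh i (by omega) : t i < x₀).ne'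
      have htA2 : ∀ i : Fin (n+1), t i ∈ A := by
        intro i
        refine hAt _ ?_
        rw [hvt i]; exact hs1 _
      have hσ2 : ∀ i : Fin (n+1), P.eval (t i) = 1 ∨ P.eval (t i) = -1 := by
        intro i; rw [hvt i]; exact hs1 _
      have hadj : ∀ i : Fin n, P.eval (t i.castSucc) * P.eval (t i.succ) *
          ((x₀ - t i.castSucc) * (x₀ - t i.succ)) < 0 := by
        intro i
        have h1 : t i.castSucc = tv (i : ℕ) := by simp [htdef]
        have h2 : t i.succ = tv ((i : ℕ) + 1) := by simp [htdef]
        have e1 : P.eval (t i.castSucc) = s (i : ℕ) := by rw [h1]; exact hval i (by omega)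
        have e2 : P.eval (t i.succ) = s ((i : ℕ) + 1) := by rw [h2]; exact hval _ (by omega)
        rw [e1, e2, h1, h2, hsalt i i.isLt]
        have hp := mul_pos
          (sub_pos.2 (hhigh i (by omega))) (sub_pos.2 (hhigh ((i : ℕ) + 1) (by omega)))
        linarith
      exact core_lemma n P Q hPdeg' hQdeg' A hbdd x₀ t hmono htA2 hσ2 hxne hadj
    · -- interior case : 1 ≤ k < n
      have hk1 : 1 ≤ k := by omega
      have hk2 : k < n := by omega
      obtain ⟨hwm1, hwm2, hwm3⟩ := hwm hk1
      obtain ⟨hwp1, hwp2, hwp3⟩ := hwp hk2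
      set tv : ℕ → ℝ := fun j =>
        if j < k then (if j = 0 then wl else ndI j)
        else if j = k then wm
        else if j = k + 1 then wp
        else ndI (j - 1) with htv
      set t : Fin (n+1) → ℝ := fun i => tv (i : ℕ) with htdef
      set sig : ℕ → ℝ := fun j =>
        if j ≤ k then s j else if j = k + 1 then s k else s (j - 1) with hsigdef
      have hsig_le : ∀ j, j ≤ k → sig j = s j := by
        intro j hj
        show (if j ≤ k then s j else if j = k + 1 then s k else s (j - 1)) = s j
        rw [if_pos hj]
      have hsig_k1 : sig (k + 1) = s k := by
        show (if k + 1 ≤ k then s (k + 1) else if k + 1 = k + 1 then s k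
          else s (k + 1 - 1)) = s k
        rw [if_neg (by omega), if_pos rfl]
      have hsig_hi : ∀ j, k + 2 ≤ j → sig j = s (j - 1) := by
        intro j hj
        show (if j ≤ k then s j else if j = k + 1 then s k else s (j - 1)) = s (j - 1)
        rw [if_neg (by omega), if_neg (by omega)]
      have hsig1 : ∀ j, sig j = 1 ∨ sig j = -1 := by
        intro j
        by_cases h1 : j ≤ k
        · rw [hsig_le j h1]; exact hs1 j
        · by_cases h2 : j = k + 1
          · rw [h2, hsig_k1]; exact hs1 k
          · rw [hsig_hi j (by omega)]; exact hs1 _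
      have hval : ∀ j : ℕ, j ≤ n → P.eval (tv j) = sig j := by
        intro j hj
        simp only [htv]
        split_ifs with h1 h2 h3 h4
        · subst h2; rw [hsig_le 0 (by omega)]; exact hwl2
        · rw [hsig_le j (by omega)]; exact (hndI j (by omega) (by omega)).2.2
        · subst h3; rw [hsig_le k le_rfl]; exact hwm3
        · subst h4; rw [hsig_k1]; exact hwp3
        · rw [hsig_hi j (by omega)]; exact (hndI (j - 1) (by omega) (by omega)).2.2
      have hsidL : ∀ j : ℕ, j ≤ k → tv j < x₀ := by
        intro j hj
        simp only [htv]
        split_ifs with h1 h2 h3 h4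
        · have h5 : z ⟨0, by omega⟩ < x₀ := hzk 0 (by omega) (by omega)
          have h6 := hwl1
          rw [hznz 0 (by omega)] at h6
          linarith
        · have h5 : z ⟨j, by omega⟩ < x₀ := hzk j (by omega) (by omega)
          have h6 := (hndI j (by omega) (by omega)).2.1
          rw [hznz j (by omega)] at h6
          linarith
        · exact hwm2
        · exact (by omega : False).elim
        · exact (by omega : False).elim
      have hsidR : ∀ j : ℕ, k < j → j ≤ n → x₀ < tv j := by
        intro j hj1 hj2
        simp only [htv]
        split_ifs with h1 h2 h3 h4
        · exact (by omega : False).elim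
        · exact (by omega : False).elim
        · exact (by omega : False).elim
        · exact hwp1
        · have h5 : x₀ < z ⟨j - 2, by omega⟩ := hgapR _ (by simp; omega)
          have h6 := (hndI (j - 1) (by omega) (by omega)).1
          rw [show j - 1 - 1 = j - 2 from by omega, hznz (j - 2) (by omega)] at h6
          linarith
      have hmono' : ∀ j : ℕ, j < n → tv j < tv (j + 1) := by
        intro j hj
        simp only [htv]
        by_cases hb1 : j + 1 < k
        · rw [if_pos (by omega : j < k), if_pos hb1, if_neg (by omega : ¬ j + 1 = 0)]
          have h6 := (hndI (j + 1) (by omega) (by omega)).1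
          simp only [Nat.add_sub_cancel] at h6
          rw [hznz j (by omega)] at h6
          by_cases h0 : j = 0
          · rw [if_pos h0]
            have h7 := hwl1
            rw [hznz 0 (by omega)] at h7
            have hidx : (⟨j, by omega⟩ : Fin n) = ⟨0, by omega⟩ := by
              simp only [Fin.ext_iff]; omega
            rw [hidx] at h6
            linarith
          · rw [if_neg h0]
            have h7 := (hndI j (by omega) (by omega)).2.1
            rw [hznz j (by omega)] at h7
            linarith
        · by_cases hb2 : j + 1 = k
          · rw [if_pos (by omega : j < k), if_neg (by omega : ¬ j + 1 < k), if_pos hb2]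
            have h6 := hwm1
            rw [show k - 1 = j from by omega, hznz j (by omega)] at h6
            by_cases h0 : j = 0
            · rw [if_pos h0]
              have h7 := hwl1
              rw [hznz 0 (by omega)] at h7
              have hidx : (⟨j, by omega⟩ : Fin n) = ⟨0, by omega⟩ := by
                simp only [Fin.ext_iff]; omega
              rw [hidx] at h6
              linarith
            · rw [if_neg h0]
              have h7 := (hndI j (by omega) (by omega)).2.1
              rw [hznz j (by omega)] at h7
              linarith
          · by_cases hb3 : j = k
            · rw [if_neg (by omega : ¬ j < k), if_pos hb3, if_neg (by omega : ¬ j + 1 < k),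
                if_neg (by omega : ¬ j + 1 = k), if_pos (by omega : j + 1 = k + 1)]
              linarith
            · by_cases hb4 : j = k + 1
              · rw [if_neg (by omega : ¬ j < k), if_neg (by omega : ¬ j = k),
                  if_pos hb4, if_neg (by omega : ¬ j + 1 < k),
                  if_neg (by omega : ¬ j + 1 = k), if_neg (by omega : ¬ j + 1 = k + 1)]
                have h6 := hwp2
                rw [hznz k (by omega)] at h6
                have h7 := (hndI (j + 1 - 1) (by omega) (by omega)).1
                rw [show j + 1 - 1 - 1 = k from by omega, hznz k (by omega)] at h7
                linarith
              · rw [if_neg (by omega : ¬ j < k), if_neg (by omega : ¬ j = k),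
                  if_neg (by omega : ¬ j = k + 1), if_neg (by omega : ¬ j + 1 < k),
                  if_neg (by omega : ¬ j + 1 = k), if_neg (by omega : ¬ j + 1 = k + 1)]
                have h6 := (hndI (j - 1) (by omega) (by omega)).2.1
                rw [hznz (j - 1) (by omega)] at h6
                have h7 := (hndI (j + 1 - 1) (by omega) (by omega)).1
                rw [show j + 1 - 1 - 1 = j - 1 from by omega,
                  hznz (j - 1) (by omega)] at h7
                rw [show j + 1 - 1 = j from by omega] at h7 ⊢
                linarith
      have hmono : StrictMono t := by
        rw [Fin.strictMono_iff_lt_succ]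
        intro i
        have h1 : t i.castSucc = tv (i : ℕ) := by simp [htdef]
        have h2 : t i.succ = tv ((i : ℕ) + 1) := by simp [htdef]
        rw [h1, h2]
        exact hmono' i i.isLt
      have hvt : ∀ i : Fin (n+1), P.eval (t i) = sig (i : ℕ) := by
        intro i
        rw [htdef]
        exact hval i (by omega)
      have hxne : ∀ i : Fin (n+1), x₀ ≠ t i := by
        intro i
        rcases le_or_gt ((i : ℕ)) k with h | h
        · exact (by rw [htdef]; exact hsidL i h : t i < x₀).ne'
        · exact (by rw [htdef]; exact hsidR i h (by omega) : x₀ < t i).ne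
      have htA2 : ∀ i : Fin (n+1), t i ∈ A := by
        intro i
        refine hAt _ ?_
        rw [hvt i]; exact hsig1 _
      have hσ2 : ∀ i : Fin (n+1), P.eval (t i) = 1 ∨ P.eval (t i) = -1 := by
        intro i; rw [hvt i]; exact hsig1 _
      have hadj : ∀ i : Fin n, P.eval (t i.castSucc) * P.eval (t i.succ) *
          ((x₀ - t i.castSucc) * (x₀ - t i.succ)) < 0 := by
        intro i
        have h1 : t i.castSucc = tv (i : ℕ) := by simp [htdef]
        have h2 : t i.succ = tv ((i : ℕ) + 1) := by simp [htdef]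
        have e1 : P.eval (t i.castSucc) = sig (i : ℕ) := by rw [h1]; exact hval i (by omega)
        have e2 : P.eval (t i.succ) = sig ((i : ℕ) + 1) := by rw [h2]; exact hval _ (by omega)
        rw [e1, e2, h1, h2]
        set j := (i : ℕ) with hjdef
        have hjn : j < n := i.isLt
        by_cases hb1 : j + 1 ≤ k
        · rw [hsig_le j (by omega), hsig_le (j + 1) hb1]
          have hp := mul_pos
            (sub_pos.2 (hsidL j (by omega))) (sub_pos.2 (hsidL (j + 1) hb1))
          have := hsalt j (by omega)
          nlinarith
        · by_cases hb2 : j = k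
          · have hik : sig (j + 1) = s k := by
              rw [show j + 1 = k + 1 from by omega, hsig_k1]
            rw [hsig_le j (by omega), hik]
            have hkk : s j * s k = 1 := by
              rw [hb2]; rcases hs1 k with h | h <;> rw [h] <;> norm_num
            have hd := mul_neg_of_pos_of_neg
              (sub_pos.2 (hsidL j (by omega))) (sub_neg.2 (hsidR (j + 1) (by omega) (by omega)))
            nlinarith
          · by_cases hb3 : j = k + 1
            · rw [hb3, hsig_k1, hsig_hi (k + 1 + 1) (by omega)]
              rw [show k + 1 + 1 - 1 = k + 1 from by omega]
              have hp := mul_pos_of_neg_of_neg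
                (sub_neg.2 (hsidR j (by omega) (by omega)))
                (sub_neg.2 (hsidR (j + 1) (by omega) (by omega)))
              have := hsalt k (by omega)
              rw [← hb3] at this ⊢
              nlinarith
            · rw [hsig_hi j (by omega), hsig_hi (j + 1) (by omega),
                show j + 1 - 1 = j from by omega]
              have hp := mul_pos_of_neg_of_neg
                (sub_neg.2 (hsidR j (by omega) (by omega)))
                (sub_neg.2 (hsidR (j + 1) (by omega) (by omega)))
              have h8 := hsalt (j - 1) (by omega)
              rw [show j - 1 + 1 = j from by omega] at h8
              nlinarith
      exact core_lemma n P Q hPdeg' hQdeg' A hbdd x₀ t hmono htA2 hσ2 hxne hadj
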